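/- Fix m ∈ [0,1) and for each natural number N set I_N = ∫₀^{2K(m)} dn(u|m)^N du. Then for every natural number N ≥ 1 the recursion (N + 1)·I_{N+2} = (2 − m)·N·I_N − (N − 1)·(1 − m)·I_{N−2} holds. -/

import Mathlib

open Real

/-- Incomplete elliptic integral of the first kind `F(θ|m) = ∫₀^θ ds/√(1 - m sin²s)`. -/
noncomputable def ellF (m θ : ℝ) : ℝ :=
  ∫ s in (0:ℝ)..θ, 1 / Real.sqrt (1 - m * Real.sin s ^ 2)

/-- Complete elliptic integral of the first kind `K(m) = F(π/2|m)`. -/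
noncomputable def ellK (m : ℝ) : ℝ := ellF m (π / 2)

/-- Complete elliptic integral of the second kind `E(m) = ∫₀^{π/2} √(1 - m sin²θ) dθ`. -/
noncomputable def ellE (m : ℝ) : ℝ :=
  ∫ θ in (0:ℝ)..(π / 2), Real.sqrt (1 - m * Real.sin θ ^ 2)

/-- Jacobi amplitude: the inverse function of `θ ↦ F(θ|m)`. -/
noncomputable def am (m u : ℝ) : ℝ := Function.invFun (ellF m) u

/-- Jacobi elliptic sine. -/
noncomputable def sn (m u : ℝ) : ℝ := Real.sin (am m u)

/-- Jacobi elliptic cosine. -/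
noncomputable def cn (m u : ℝ) : ℝ := Real.cos (am m u)

/-- Jacobi delta amplitude. -/
noncomputable def dn (m u : ℝ) : ℝ := Real.sqrt (1 - m * sn m u ^ 2)

section Aux

variable {m : ℝ} (hm0 : 0 ≤ m) (hm1 : m < 1)

include hm0 hm1

lemma aux_pos (x : ℝ) : 0 < 1 - m * Real.sin x ^ 2 := by
  nlinarith [Real.sin_sq_le_one x, mul_le_mul_of_nonneg_left (Real.sin_sq_le_one x) hm0]

lemma aux_cont : Continuous fun s : ℝ => 1 / Real.sqrt (1 - m * Real.sin s ^ 2) := by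
  apply Continuous.div continuous_const
  · exact (continuous_const.sub (continuous_const.mul (Real.continuous_sin.pow 2))).sqrt
  · exact fun x => ne_of_gt (Real.sqrt_pos.mpr (aux_pos hm0 hm1 x))

lemma ellF_hasDerivAt (θ : ℝ) :
    HasDerivAt (ellF m) (1 / Real.sqrt (1 - m * Real.sin θ ^ 2)) θ := by
  have hc := aux_cont hm0 hm1
  exact intervalIntegral.integral_hasDerivAt_right (hc.intervalIntegrable 0 θ)
    (hc.stronglyMeasurableAtFilter _ _) hc.continuousAt

lemma ellF_strictMono : StrictMono (ellF m) := by
  apply strictMono_of_deriv_pos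
  intro x
  rw [(ellF_hasDerivAt hm0 hm1 x).deriv]
  exact div_pos one_pos (Real.sqrt_pos.mpr (aux_pos hm0 hm1 x))

lemma aux_one_le (s : ℝ) : (1 : ℝ) ≤ 1 / Real.sqrt (1 - m * Real.sin s ^ 2) := by
  rw [le_div_iff₀ (Real.sqrt_pos.mpr (aux_pos hm0 hm1 s)), one_mul]
  have h1 : Real.sqrt (1 - m * Real.sin s ^ 2) ≤ Real.sqrt 1 :=
    Real.sqrt_le_sqrt (by nlinarith [mul_nonneg hm0 (sq_nonneg (Real.sin s))])
  simpa using h1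

lemma ellF_ge (θ : ℝ) (hθ : 0 ≤ θ) : θ ≤ ellF m θ := by
  calc θ = ∫ _ in (0:ℝ)..θ, (1:ℝ) := by simp
    _ ≤ ellF m θ :=
      intervalIntegral.integral_mono_on hθ intervalIntegrable_const
        ((aux_cont hm0 hm1).intervalIntegrable 0 θ) (fun s _ => aux_one_le hm0 hm1 s)

lemma ellF_le (θ : ℝ) (hθ : θ ≤ 0) : ellF m θ ≤ θ := by
  have h1 : -θ ≤ ∫ s in θ..(0:ℝ), 1 / Real.sqrt (1 - m * Real.sin s ^ 2) := by
    calc -θ = ∫ _ in θ..(0:ℝ), (1:ℝ) := by simp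
      _ ≤ _ :=
        intervalIntegral.integral_mono_on hθ intervalIntegrable_const
          ((aux_cont hm0 hm1).intervalIntegrable θ 0) (fun s _ => aux_one_le hm0 hm1 s)
  have h2 : ellF m θ = -∫ s in θ..(0:ℝ), 1 / Real.sqrt (1 - m * Real.sin s ^ 2) := by
    rw [ellF, intervalIntegral.integral_symm]
  linarith

lemma ellF_continuous : Continuous (ellF m) :=
  continuous_iff_continuousAt.mpr fun x => (ellF_hasDerivAt hm0 hm1 x).continuousAt

lemma ellF_surj : Function.Surjective (ellF m) := by
  intro u
  set b : ℝ := |u| + 1 with hb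
  have hb0 : 0 ≤ b := by positivity
  have hub : u ≤ ellF m b :=
    le_trans (le_trans (le_abs_self u) (by linarith)) (ellF_ge hm0 hm1 b hb0)
  have hua : ellF m (-b) ≤ u := by
    have := ellF_le hm0 hm1 (-b) (by linarith)
    have h2 := neg_abs_le u
    linarith
  have hab : -b ≤ b := by linarith
  obtain ⟨θ, _, hθ⟩ := intermediate_value_Icc hab (ellF_continuous hm0 hm1).continuousOn
    ⟨hua, hub⟩
  exact ⟨θ, hθ⟩

lemma am_rightInverse (u : ℝ) : ellF m (am m u) = u :=
  Function.invFun_eq (ellF_surj hm0 hm1 u)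

lemma am_leftInverse (θ : ℝ) : am m (ellF m θ) = θ :=
  Function.leftInverse_invFun (ellF_strictMono hm0 hm1).injective θ

lemma am_continuous : Continuous (am m) := by
  have heq : am m = ⇑(StrictMono.orderIsoOfSurjective (ellF m) (ellF_strictMono hm0 hm1)
      (ellF_surj hm0 hm1)).symm := by
    funext u
    apply (ellF_strictMono hm0 hm1).injective
    rw [am_rightInverse hm0 hm1 u]
    exact (StrictMono.orderIsoOfSurjective_self_symm_apply (ellF m) (ellF_strictMono hm0 hm1)
      (ellF_surj hm0 hm1) u).symm
  rw [heq]
  exact OrderIso.continuous _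

lemma am_hasDerivAt (u : ℝ) :
    HasDerivAt (am m) (Real.sqrt (1 - m * Real.sin (am m u) ^ 2)) u := by
  have h := HasDerivAt.of_local_left_inverse ((am_continuous hm0 hm1).continuousAt)
    (ellF_hasDerivAt hm0 hm1 (am m u))
    (ne_of_gt (div_pos one_pos (Real.sqrt_pos.mpr (aux_pos hm0 hm1 (am m u)))))
    (Filter.Eventually.of_forall (am_rightInverse hm0 hm1))
  simpa [one_div] using h

lemma dn_pos (u : ℝ) : 0 < dn m u :=
  Real.sqrt_pos.mpr (aux_pos hm0 hm1 (am m u))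

lemma dn_sq (u : ℝ) : dn m u ^ 2 = 1 - m * sn m u ^ 2 :=
  Real.sq_sqrt (le_of_lt (aux_pos hm0 hm1 (am m u)))

lemma cn_sq (u : ℝ) : cn m u ^ 2 = 1 - sn m u ^ 2 := Real.cos_sq' (am m u)

lemma sn_hasDerivAt (u : ℝ) : HasDerivAt (sn m) (cn m u * dn m u) u := by
  have h := (Real.hasDerivAt_sin (am m u)).comp u (am_hasDerivAt hm0 hm1 u)
  exact h

lemma cn_hasDerivAt (u : ℝ) : HasDerivAt (cn m) (-(sn m u * dn m u)) u := by
  have h := (Real.hasDerivAt_cos (am m u)).comp u (am_hasDerivAt hm0 hm1 u)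
  have h' : HasDerivAt (cn m) (-Real.sin (am m u) * Real.sqrt (1 - m * Real.sin (am m u) ^ 2)) u := h
  simpa [sn, cn, dn, Function.comp, neg_mul] using h'

lemma dn_hasDerivAt (u : ℝ) : HasDerivAt (dn m) (-(m * sn m u * cn m u)) u := by
  have h2 : HasDerivAt (fun v => 1 - m * sn m v ^ 2)
      (-(m * (2 * sn m u ^ 1 * (cn m u * dn m u)))) u :=
    (((sn_hasDerivAt hm0 hm1 u).pow 2).const_mul m).const_sub 1
  have h3 := h2.sqrt (ne_of_gt (aux_pos hm0 hm1 (am m u)))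
  have hd : Real.sqrt (1 - m * sn m u ^ 2) = dn m u := rfl
  rw [hd] at h3
  convert h3 using 1
  · rfl
  have hdp := ne_of_gt (dn_pos hm0 hm1 u)
  field_simp

lemma sn_continuous : Continuous (sn m) :=
  Real.continuous_sin.comp (am_continuous hm0 hm1)

lemma cn_continuous : Continuous (cn m) :=
  Real.continuous_cos.comp (am_continuous hm0 hm1)

lemma dn_continuous : Continuous (dn m) :=
  (continuous_const.sub (continuous_const.mul ((sn_continuous hm0 hm1).pow 2))).sqrt

lemma am_zero : am m 0 = 0 := by
  have h := am_leftInverse hm0 hm1 0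
  have h0 : ellF m 0 = 0 := intervalIntegral.integral_same
  rwa [h0] at h

lemma sn_zero : sn m 0 = 0 := by rw [sn, am_zero hm0 hm1, Real.sin_zero]

lemma ellF_pi : ellF m π = 2 * ellK m := by
  have hint := (aux_cont hm0 hm1).intervalIntegrable (μ := MeasureTheory.volume)
  have h1 : (∫ s in (0:ℝ)..(π/2), 1 / Real.sqrt (1 - m * Real.sin s ^ 2))
      + ∫ s in (π/2)..π, 1 / Real.sqrt (1 - m * Real.sin s ^ 2) = ellF m π :=
    intervalIntegral.integral_add_adjacent_intervals (hint 0 (π/2)) (hint (π/2) π)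
  have h2 : (∫ s in (π/2)..π, 1 / Real.sqrt (1 - m * Real.sin s ^ 2))
      = ∫ s in (0:ℝ)..(π/2), 1 / Real.sqrt (1 - m * Real.sin s ^ 2) := by
    have h3 := intervalIntegral.integral_comp_sub_left (a := 0) (b := π/2)
      (fun s => 1 / Real.sqrt (1 - m * Real.sin s ^ 2)) π
    simp only [Real.sin_pi_sub, sub_zero] at h3
    rw [show π - π/2 = π/2 by ring] at h3
    exact h3.symm
  rw [ellK]
  unfold ellF at h1 ⊢
  linarith

lemma am_two_ellK : am m (2 * ellK m) = π := by
  have h := am_leftInverse hm0 hm1 π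
  rwa [ellF_pi hm0 hm1] at h

lemma sn_two_ellK : sn m (2 * ellK m) = 0 := by
  rw [sn, am_two_ellK hm0 hm1, Real.sin_pi]

/-- The integral of the derivative of `sn · cn · dn^j` over a full half-period vanishes. -/
lemma key_integral (j : ℕ) :
    ∫ u in (0:ℝ)..(2 * ellK m),
      ((cn m u * dn m u * cn m u + sn m u * -(sn m u * dn m u)) * dn m u ^ j
        + sn m u * cn m u * ((j : ℝ) * dn m u ^ (j - 1) * -(m * sn m u * cn m u))) = 0 := by
  have hD : ∀ u : ℝ, HasDerivAt (fun v => sn m v * cn m v * dn m v ^ j)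
      ((cn m u * dn m u * cn m u + sn m u * -(sn m u * dn m u)) * dn m u ^ j
        + sn m u * cn m u * ((j : ℝ) * dn m u ^ (j - 1) * -(m * sn m u * cn m u))) u :=
    fun u => ((sn_hasDerivAt hm0 hm1 u).mul (cn_hasDerivAt hm0 hm1 u)).mul
      ((dn_hasDerivAt hm0 hm1 u).pow j)
  have hs := sn_continuous hm0 hm1
  have hc := cn_continuous hm0 hm1
  have hd := dn_continuous hm0 hm1
  have hcontD : Continuous (fun u =>
      (cn m u * dn m u * cn m u + sn m u * -(sn m u * dn m u)) * dn m u ^ j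
        + sn m u * cn m u * ((j : ℝ) * dn m u ^ (j - 1) * -(m * sn m u * cn m u))) := by
    fun_prop
  have h0 := intervalIntegral.integral_eq_sub_of_hasDerivAt
    (f := fun v => sn m v * cn m v * dn m v ^ j) (a := 0) (b := 2 * ellK m) (fun u _ => hD u)
    (hcontD.intervalIntegrable _ _)
  rw [h0]
  simp [sn_zero hm0 hm1, sn_two_ellK hm0 hm1]

lemma key_pointwise (k : ℕ) (u : ℝ) :
    ((k:ℝ)+3) * dn m u ^ (k+4) - (2-m) * ((k:ℝ)+2) * dn m u ^ (k+2)
      + ((k:ℝ)+1) * (1-m) * dn m u ^ k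
    = m * ((cn m u * dn m u * cn m u + sn m u * -(sn m u * dn m u)) * dn m u ^ (k+1)
        + sn m u * cn m u * (((k+1 : ℕ) : ℝ) * dn m u ^ (k+1-1) * -(m * sn m u * cn m u))) := by
  have hc : cn m u ^ 2 = 1 - sn m u ^ 2 := cn_sq hm0 hm1 u
  have hd : dn m u ^ 2 = 1 - m * sn m u ^ 2 := dn_sq hm0 hm1 u
  have h1 : k + 1 - 1 = k := rfl
  rw [h1]
  push_cast
  set s := sn m u
  set c := cn m u
  set d := dn m u
  linear_combination (-(d^k * (m*d^2 - m^2*((k:ℝ)+1)*s^2))) * hc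
    + (-(d^k * (-((k:ℝ)+3)*(d^2 + 1 - m*s^2) + m - 2*m*s^2 + (2-m)*((k:ℝ)+2)))) * hd

lemma key_pointwise_one (u : ℝ) :
    2 * dn m u ^ 3 - (2-m) * dn m u ^ 1
    = m * ((cn m u * dn m u * cn m u + sn m u * -(sn m u * dn m u)) * dn m u ^ 0
        + sn m u * cn m u * (((0 : ℕ) : ℝ) * dn m u ^ (0-1) * -(m * sn m u * cn m u))) := by
  have hc : cn m u ^ 2 = 1 - sn m u ^ 2 := cn_sq hm0 hm1 u
  have hd : dn m u ^ 2 = 1 - m * sn m u ^ 2 := dn_sq hm0 hm1 u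
  push_cast
  set s := sn m u
  set c := cn m u
  set d := dn m u
  linear_combination (-(m*d)) * hc + (2*d) * hd

end Aux

/-- **Recursion for the moments `I_N = ∫₀^{2K(m)} dn(u|m)^N du`:**
for `N ≥ 1`, `(N+1) I_{N+2} = (2-m) N I_N - (N-1)(1-m) I_{N-2}`. -/
theorem dn_moment_recursion (m : ℝ) (hm : m ∈ Set.Ico (0:ℝ) 1)
    (I : ℕ → ℝ) (hI : ∀ N : ℕ, I N = ∫ u in (0:ℝ)..(2 * ellK m), dn m u ^ N)
    (N : ℕ) (hN : 1 ≤ N) :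
    ((N : ℝ) + 1) * I (N + 2) =
      (2 - m) * (N : ℝ) * I N - ((N : ℝ) - 1) * (1 - m) * I (N - 2) := by
  obtain ⟨hm0, hm1⟩ := hm
  have hdc : Continuous (dn m) := dn_continuous hm0 hm1
  have hi : ∀ n : ℕ, IntervalIntegrable (fun u => dn m u ^ n)
      MeasureTheory.volume 0 (2 * ellK m) := fun n => (hdc.pow n).intervalIntegrable _ _
  match N, hN with
  | 1, _ =>
    norm_num
    rw [hI 3, hI 1]
    have h0 := key_integral hm0 hm1 0
    have h1 : (∫ u in (0:ℝ)..(2 * ellK m), (2 * dn m u ^ 3 - (2-m) * dn m u ^ 1))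
        = 0 := by
      rw [intervalIntegral.integral_congr (g := fun u =>
        m * ((cn m u * dn m u * cn m u + sn m u * -(sn m u * dn m u)) * dn m u ^ 0
          + sn m u * cn m u * (((0:ℕ):ℝ) * dn m u ^ (0-1) * -(m * sn m u * cn m u))))
        (fun u _ => key_pointwise_one hm0 hm1 u),
        intervalIntegral.integral_const_mul, h0, mul_zero]
    rw [intervalIntegral.integral_sub ((hi 3).const_mul 2) ((hi 1).const_mul (2-m)),
      intervalIntegral.integral_const_mul, intervalIntegral.integral_const_mul] at h1
    simp only [pow_one] at h1 ⊢
    linarith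
  | (k+2), _ =>
    have e1 : k + 2 + 2 = k + 4 := rfl
    have e2 : k + 2 - 2 = k := rfl
    rw [e1, e2, hI (k+4), hI (k+2), hI k]
    push_cast
    have h0 := key_integral hm0 hm1 (k+1)
    have h1 : (∫ u in (0:ℝ)..(2 * ellK m),
        (((k:ℝ)+3) * dn m u ^ (k+4) - (2-m) * ((k:ℝ)+2) * dn m u ^ (k+2)
          + ((k:ℝ)+1) * (1-m) * dn m u ^ k)) = 0 := by
      rw [intervalIntegral.integral_congr (g := fun u =>
        m * ((cn m u * dn m u * cn m u + sn m u * -(sn m u * dn m u)) * dn m u ^ (k+1)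
          + sn m u * cn m u * (((k+1:ℕ):ℝ) * dn m u ^ (k+1-1) * -(m * sn m u * cn m u))))
        (fun u _ => key_pointwise hm0 hm1 k u),
        intervalIntegral.integral_const_mul, h0, mul_zero]
    rw [intervalIntegral.integral_add
        (((hi (k+4)).const_mul _).sub ((hi (k+2)).const_mul _)) ((hi k).const_mul _),
      intervalIntegral.integral_sub ((hi (k+4)).const_mul _) ((hi (k+2)).const_mul _),
      intervalIntegral.integral_const_mul, intervalIntegral.integral_const_mul,
      intervalIntegral.integral_const_mul] at h1
    linarith
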